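/- Let $p(\cdot), q(\cdot) \in \mathcal{P}$ with $1 < p(x) \le q(x) < \infty$, and suppose there exists $\sigma > 1$ with $1/p(x) - 1/q(x) = 1/\sigma'$ for all $x$. Then $w \in A_{p(\cdot),q(\cdot)}$ if and only if $w^\sigma \in A_{q(\cdot)/\sigma}$. -/

import Mathlib

open MeasureTheory Metric ENNReal

noncomputable section

abbrev Rn (n : ℕ) := EuclideanSpace ℝ (Fin n)

variable {n : ℕ}

/-- The variable Lebesgue (quasi-)norm of an `ℝ≥0∞`-valued function `f` with
exponent function `p` (values in `(0,∞]`), following the definition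
`‖f‖ = inf { λ > 0 : ∫_{p≠∞} (f/λ)^{p(x)} dx + ‖f/λ‖_{L^∞({p=∞})} ≤ 1 }`. -/
def vnorm (p : Rn n → ℝ≥0∞) (f : Rn n → ℝ≥0∞) : ℝ≥0∞ :=
  sInf {l : ℝ≥0∞ | 0 < l ∧
    (∫⁻ x in {x | p x ≠ ∞}, (f x / l) ^ (p x).toReal) +
      essSup (fun x => f x / l) (volume.restrict {x | p x = ∞}) ≤ 1}

/-- The pointwise conjugate exponent: `1/a + 1/a' = 1`, with `1' = ∞`, `∞' = 1`. -/
def econj (a : ℝ≥0∞) : ℝ≥0∞ := (1 - a⁻¹)⁻¹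

/-- Variable exponent Muckenhoupt constant
`[w]_{A_{p(·)}} = sup_B |B|⁻¹ ‖w χ_B‖_{p(·)} ‖w⁻¹ χ_B‖_{p'(·)}`. -/
def ApVarConst (p : Rn n → ℝ≥0∞) (w : Rn n → ℝ≥0∞) : ℝ≥0∞ :=
  ⨆ (c : Rn n) (r : ℝ) (_ : 0 < r),
    (volume (ball c r))⁻¹ * vnorm p ((ball c r).indicator w) *
      vnorm (fun x => econj (p x)) ((ball c r).indicator fun y => (w y)⁻¹)

/-- Classical Muckenhoupt `A_p` constant for `1 < p < ∞`:
`sup_B (|B|⁻¹∫_B w)(|B|⁻¹∫_B w^{1-p'})^{p-1}` with `p' = p/(p-1)`. -/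
def ApConst (p : ℝ) (w : Rn n → ℝ≥0∞) : ℝ≥0∞ :=
  ⨆ (c : Rn n) (r : ℝ) (_ : 0 < r),
    ((volume (ball c r))⁻¹ * ∫⁻ y in ball c r, w y) *
      (((volume (ball c r))⁻¹ * ∫⁻ y in ball c r, (w y) ^ (1 - p / (p - 1))) ^ (p - 1))

/-- The `A_1` constant `sup_B (|B|⁻¹∫_B w)/essinf_B w`. -/
def A1Const (w : Rn n → ℝ≥0∞) : ℝ≥0∞ :=
  ⨆ (c : Rn n) (r : ℝ) (_ : 0 < r),
    ((volume (ball c r))⁻¹ * ∫⁻ y in ball c r, w y) /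
      essInf w (volume.restrict (ball c r))

/-- `w ∈ A_p` for `1 ≤ p < ∞` (with the `A_1` condition when `p = 1`). -/
def IsAp (p : ℝ) (w : Rn n → ℝ≥0∞) : Prop :=
  if p = 1 then A1Const w < ∞ else ApConst p w < ∞

/-- `A_∞ = ⋃_{t>1} A_t`. -/
def IsAinf (w : Rn n → ℝ≥0∞) : Prop := ∃ t : ℝ, 1 < t ∧ ApConst t w < ∞

/-- The reverse Hölder constant `[w]_{RH_s} = sup_B (|B|⁻¹∫_B w^s)^{1/s}/(|B|⁻¹∫_B w)`. -/
def RHConst (s : ℝ) (w : Rn n → ℝ≥0∞) : ℝ≥0∞ :=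
  ⨆ (c : Rn n) (r : ℝ) (_ : 0 < r),
    (((volume (ball c r))⁻¹ * ∫⁻ y in ball c r, (w y) ^ s) ^ (1 / s)) /
      ((volume (ball c r))⁻¹ * ∫⁻ y in ball c r, w y)

/-- The `A_{p,q}` constant for `1 < p ≤ q < ∞`:
`sup_B (|B|⁻¹∫_B w^q)^{1/q} (|B|⁻¹∫_B w^{-p'})^{1/p'}`. -/
def ApqConst (p q : ℝ) (w : Rn n → ℝ≥0∞) : ℝ≥0∞ :=
  ⨆ (c : Rn n) (r : ℝ) (_ : 0 < r),
    (((volume (ball c r))⁻¹ * ∫⁻ y in ball c r, (w y) ^ q) ^ (1 / q)) *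
      (((volume (ball c r))⁻¹ * ∫⁻ y in ball c r, (w y) ^ (-(p / (p - 1)))) ^ (1 - 1 / p))

/-- `w ∈ A_{p,q}` for `1 ≤ p ≤ q`, with the `A_{1,q}` condition when `p = 1`. -/
def IsApq (p q : ℝ) (w : Rn n → ℝ≥0∞) : Prop :=
  if p = 1 then A1Const (fun x => (w x) ^ q) < ∞ else ApqConst p q w < ∞

/-- The variable exponent `A_{p(·),q(·)}` constant (with parameter `γ = 1/p - 1/q`):
`sup_B |B|^{γ-1} ‖w χ_B‖_{q(·)} ‖w⁻¹ χ_B‖_{p'(·)}`. -/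
def ApqVarConst (γ : ℝ) (p q : Rn n → ℝ≥0∞) (w : Rn n → ℝ≥0∞) : ℝ≥0∞ :=
  ⨆ (c : Rn n) (r : ℝ) (_ : 0 < r),
    (volume (ball c r)) ^ (γ - 1) * vnorm q ((ball c r).indicator w) *
      vnorm (fun x => econj (p x)) ((ball c r).indicator fun y => (w y)⁻¹)

/-- The Hardy–Littlewood maximal operator (over balls containing `x`). -/
def Mop (f : Rn n → ℝ≥0∞) (x : Rn n) : ℝ≥0∞ :=
  ⨆ (c : Rn n) (r : ℝ) (_ : 0 < r) (_ : x ∈ ball c r),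
    (volume (ball c r))⁻¹ * ∫⁻ y in ball c r, f y

/-- `M` is bounded on the weighted variable Lebesgue space `L^{p(·)}(w)`. -/
def MBddOn (p : Rn n → ℝ≥0∞) (w : Rn n → ℝ≥0∞) : Prop :=
  ∃ C : ℝ≥0∞, C < ∞ ∧ ∀ f : Rn n → ℝ≥0∞, Measurable f →
    vnorm p (fun x => Mop f x * w x) ≤ C * vnorm p (fun x => f x * w x)

/-- The Rubio de Francia iteration `R h = ∑_k M^k h / (2^k N^k)` where `N` bounds
the operator norm of `M`. -/
def RdF (N : ℝ≥0∞) (h : Rn n → ℝ≥0∞) (x : Rn n) : ℝ≥0∞ :=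
  ∑' k : ℕ, (Mop^[k] h) x / (2 ^ k * N ^ k)


lemma ennreal_sInf_rpow {σ : ℝ} (hσ : 0 < σ) (s : Set ℝ≥0∞) :
    sInf ((fun x : ℝ≥0∞ => x ^ σ) '' s) = (sInf s) ^ σ := by
  have h := OrderIso.map_sInf (ENNReal.orderIsoRpow σ hσ) s
  simp only [ENNReal.orderIsoRpow_apply] at h
  rw [h, sInf_image]

lemma ennreal_iSup_rpow {ι : Sort*} {σ : ℝ} (hσ : 0 < σ) (g : ι → ℝ≥0∞) :
    (⨆ i, (g i) ^ σ) = (⨆ i, g i) ^ σ := by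
  have h := OrderIso.map_iSup (ENNReal.orderIsoRpow σ hσ) g
  simp only [ENNReal.orderIsoRpow_apply] at h
  exact h.symm

lemma vnorm_rpow {σ : ℝ} (hσ : 0 < σ) (e : Rn n → ℝ≥0∞) (he : ∀ x, e x ≠ ∞)
    (f : Rn n → ℝ≥0∞) :
    vnorm (fun x => e x / ENNReal.ofReal σ) (fun x => (f x) ^ σ) = (vnorm e f) ^ σ := by
  have hs0 : ENNReal.ofReal σ ≠ 0 := by simp [ENNReal.ofReal_eq_zero, hσ.not_ge, not_le.2 hσ]
  have hst : ENNReal.ofReal σ ≠ ∞ := ofReal_ne_top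
  have hfin : ∀ x : Rn n, e x / ENNReal.ofReal σ ≠ ∞ := fun x => by
    simp [ENNReal.div_eq_top, he x, hs0]
  have hset2 : {x : Rn n | e x / ENNReal.ofReal σ ≠ ∞} = Set.univ :=
    Set.eq_univ_of_forall hfin
  have hset2' : {x : Rn n | e x / ENNReal.ofReal σ = ∞} = ∅ := by
    ext x; simp [hfin x]
  have hset1 : {x : Rn n | e x ≠ ∞} = Set.univ := Set.eq_univ_of_forall he
  have hset1' : {x : Rn n | e x = ∞} = ∅ := by ext x; simp [he x]
  have hpt : ∀ (m : ℝ≥0∞) (x : Rn n),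
      ((f x) ^ σ / m ^ σ) ^ ((e x / ENNReal.ofReal σ).toReal)
        = ((f x) / m) ^ ((e x).toReal) := by
    intro m x
    rw [← ENNReal.div_rpow_of_nonneg _ _ hσ.le, ← ENNReal.rpow_mul,
      ENNReal.toReal_div, ENNReal.toReal_ofReal hσ.le]
    congr 1
    field_simp
  have hInt : ∀ m : ℝ≥0∞,
      (∫⁻ x, ((f x) ^ σ / m ^ σ) ^ ((e x / ENNReal.ofReal σ).toReal))
        = ∫⁻ x, ((f x) / m) ^ ((e x).toReal) := fun m => lintegral_congr (hpt m)
  unfold vnorm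
  simp only [hset1, hset1', hset2, hset2', Measure.restrict_univ, Measure.restrict_empty,
    essSup_measure_zero, _root_.bot_eq_zero, add_zero]
  rw [← ennreal_sInf_rpow hσ]
  congr 1
  ext l
  simp only [Set.mem_image, Set.mem_setOf_eq]
  constructor
  · rintro ⟨h0, hI⟩
    have hml : (l ^ (1/σ)) ^ σ = l := by
      rw [← ENNReal.rpow_mul, one_div_mul_cancel hσ.ne', ENNReal.rpow_one]
    refine ⟨l ^ (1/σ), ⟨?_, ?_⟩, hml⟩
    · rw [pos_iff_ne_zero]
      simp only [Ne, ENNReal.rpow_eq_zero_iff, not_or, not_and]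
      exact ⟨fun hl0 => absurd hl0 h0.ne', fun _ => (one_div_pos.2 hσ).not_gt⟩
    · rw [← hInt (l ^ (1/σ)), hml]
      exact hI
  · rintro ⟨m, ⟨h0, hI⟩, rfl⟩
    refine ⟨?_, ?_⟩
    · rw [pos_iff_ne_zero]
      simp [ENNReal.rpow_eq_zero_iff, h0.ne', hσ, hσ.not_gt]
    · rw [hInt m]
      exact hI

lemma econj_ne_top {a : ℝ≥0∞} (ha : 1 < a) : econj a ≠ ∞ := by
  rw [econj, Ne, ENNReal.inv_eq_top, tsub_eq_zero_iff_le, not_le]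
  exact ENNReal.inv_lt_one.2 ha

lemma econj_div {σ : ℝ} (hσ : 1 < σ) (a b : ℝ≥0∞) (ha : 1 < a) (hb : b ≠ ∞)
    (hab : a⁻¹ = b⁻¹ + ENNReal.ofReal (1 - 1/σ)) :
    econj (b / ENNReal.ofReal σ) = econj a / ENNReal.ofReal σ := by
  set s : ℝ≥0∞ := ENNReal.ofReal σ with hs
  have hσ0 : (0:ℝ) < σ := by linarith
  have hs0 : s ≠ 0 := by simp [hs, ENNReal.ofReal_eq_zero, hσ0.not_ge, not_le.2 hσ0]
  have hst : s ≠ ∞ := ofReal_ne_top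
  have hs1 : 1 ≤ s := by
    rw [hs, ← ENNReal.ofReal_one]
    exact ENNReal.ofReal_le_ofReal hσ.le
  have hofr : ENNReal.ofReal (1 - 1/σ) = 1 - s⁻¹ := by
    rw [ENNReal.ofReal_sub _ (by positivity), ENNReal.ofReal_one, one_div,
      ENNReal.ofReal_inv_of_pos hσ0]
  have hsinv : s⁻¹ ≤ 1 := ENNReal.inv_le_one.2 hs1
  have key : 1 - a⁻¹ = s⁻¹ - b⁻¹ := by
    rw [hab, hofr, add_comm, tsub_add_eq_tsub_tsub, ENNReal.sub_sub_cancel one_ne_top hsinv]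
  have hbinv : (b / s)⁻¹ = s * b⁻¹ := by
    rw [ENNReal.inv_div (Or.inl hst) (Or.inl hs0), div_eq_mul_inv]
  have hdist : s * (s⁻¹ - b⁻¹) = 1 - s * b⁻¹ := by
    rw [ENNReal.mul_sub (fun _ _ => hst), ENNReal.mul_inv_cancel hs0 hst]
  rw [econj, econj, hbinv, ← hdist, key, ENNReal.mul_inv (Or.inl hs0) (Or.inl hst),
    div_eq_mul_inv, mul_comm]


/-- `w ∈ A_{p(·),q(·)}` iff `w^σ ∈ A_{q(·)/σ}` when `1/p(x) - 1/q(x) = 1/σ'`. -/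
theorem apqVar_iff_apVar {n : ℕ} (p q : Rn n → ℝ≥0∞)
    (hp : ∀ x, 1 < p x) (hpq : ∀ x, p x ≤ q x) (hq : ∀ x, q x < ∞)
    (σ : ℝ) (hσ : 1 < σ)
    (hexp : ∀ x, (p x)⁻¹ = (q x)⁻¹ + ENNReal.ofReal (1 - 1 / σ))
    (w : Rn n → ℝ≥0∞) (hwm : Measurable w)
    (hw : ∀ᵐ x ∂(volume : Measure (Rn n)), 0 < w x ∧ w x < ∞) :
    ApqVarConst (1 - 1 / σ) p q w < ∞ ↔
      ApVarConst (fun x => q x / ENNReal.ofReal σ) (fun x => (w x) ^ σ) < ∞ := by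
  have hσ0 : (0:ℝ) < σ := by linarith
  have hqt : ∀ x, q x ≠ ∞ := fun x => (hq x).ne
  have hef : ∀ x, econj (p x) ≠ ∞ := fun x => econj_ne_top (hp x)
  have hexpfun : (fun x => econj (q x / ENNReal.ofReal σ))
      = fun x => econj (p x) / ENNReal.ofReal σ := by
    funext x
    exact econj_div hσ (p x) (q x) (hp x) (hqt x) (hexp x)
  have hkey : ApVarConst (fun x => q x / ENNReal.ofReal σ) (fun x => (w x) ^ σ)
      = (ApqVarConst (1 - 1/σ) p q w) ^ σ := by
    unfold ApVarConst ApqVarConst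
    rw [← ennreal_iSup_rpow hσ0]
    refine iSup_congr fun c => ?_
    rw [← ennreal_iSup_rpow hσ0]
    refine iSup_congr fun r => ?_
    rw [← ennreal_iSup_rpow hσ0]
    refine iSup_congr fun hr => ?_
    have hind1 : (ball c r).indicator (fun x => (w x) ^ σ)
        = fun x => ((ball c r).indicator w x) ^ σ := by
      funext x
      by_cases hx : x ∈ ball c r <;>
        simp [hx, ENNReal.zero_rpow_of_pos hσ0]
    have hind2 : ((ball c r).indicator fun y => ((w y) ^ σ)⁻¹)
        = fun x => ((ball c r).indicator (fun y => (w y)⁻¹) x) ^ σ := by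
      funext x
      by_cases hx : x ∈ ball c r <;>
        simp [hx, ENNReal.zero_rpow_of_pos hσ0, ENNReal.inv_rpow]
    rw [hind1, hind2, hexpfun,
      vnorm_rpow hσ0 q hqt ((ball c r).indicator w),
      vnorm_rpow hσ0 (fun x => econj (p x)) hef ((ball c r).indicator fun y => (w y)⁻¹),
      ENNReal.mul_rpow_of_nonneg _ _ hσ0.le, ENNReal.mul_rpow_of_nonneg _ _ hσ0.le,
      ← ENNReal.rpow_mul]
    congr 2
    rw [show (1 - 1/σ - 1) * σ = -1 by field_simp; ring, ENNReal.rpow_neg_one]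
  rw [hkey, ENNReal.rpow_lt_top_iff_of_pos hσ0]

end
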